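/- With 𝒜 the staircase valued digraph (vertices {(a,b) : 1 ≤ a < b ≤ n}, arcs from (a,b) to (a,k) and (k,b) for a < k < b, valuation θ(a,b) = b-a-1), the poset (IS(𝒜), ⊆) of initial sections ordered by inclusion is isomorphic to the right weak order on the symmetric group S_n. -/

import Mathlib

open scoped Classical

variable {V : Type*}

/-- A digraph is acyclic when its transitive closure is irreflexive. -/
def Acyclic (E : V → V → Prop) : Prop := ∀ x, ¬ Relation.TransGen E x x

/-- `θ` is an out-degree compatible valuation: `θ x ≤ d⁺(x)` for every vertex. -/
def IsOCV (E : V → V → Prop) (θ : V → ℕ) : Prop :=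
  ∀ x, ∃ s : Finset V, (∀ y ∈ s, E x y) ∧ θ x ≤ s.card

/-- The current valuation after the vertices of `R` have been peeled. -/
noncomputable def curVal (E : V → V → Prop) (θ : V → ℕ) (R : Finset V) (x : V) : ℕ :=
  θ x - (R.filter fun y => E x y).card

/-- `x` is erasable in the valued digraph obtained after peeling the vertices of `R`. -/
def ErasableAt (E : V → V → Prop) (θ : V → ℕ) (R : Finset V) (x : V) : Prop :=
  x ∉ R ∧ curVal E θ R x = 0 ∧ ∀ z, z ∉ R → E z x → curVal E θ R z ≠ 0

/-- `PeelFrom E θ R L`: starting from the state where `R` has been peeled, the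
list `L` is a valid sequence of successive peelings. -/
def PeelFrom (E : V → V → Prop) (θ : V → ℕ) : Finset V → List V → Prop
  | _, [] => True
  | R, x :: L => ErasableAt E θ R x ∧ PeelFrom E θ (insert x R) L

/-- `A` is an initial section of some peeling sequence of the valued digraph `(G, θ)`. -/
def IsInitialSection (E : V → V → Prop) (θ : V → ℕ) (A : Finset V) : Prop :=
  ∃ L : List V, PeelFrom E θ ∅ L ∧ L.toFinset = A
/-- The inversion set of a permutation `σ ∈ S_n`:
pairs `(a,b)` with `a < b` and `σ⁻¹ a > σ⁻¹ b`. -/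
def InvSet {n : ℕ} (σ : Equiv.Perm (Fin n)) : Finset (Fin n × Fin n) :=
  Finset.univ.filter fun p => p.1 < p.2 ∧ σ⁻¹ p.2 < σ⁻¹ p.1

/-- Coxeter length of a permutation, i.e. its number of inversions. -/
def permLen {n : ℕ} (σ : Equiv.Perm (Fin n)) : ℕ := (InvSet σ).card

/-- `s` is a simple transposition `s_i = (i, i+1)`. -/
def IsSimpleT {n : ℕ} (s : Equiv.Perm (Fin n)) : Prop :=
  ∃ i j : Fin n, (j : ℕ) = (i : ℕ) + 1 ∧ s = Equiv.swap i j

/-- The right weak order on `S_n`: `σ ≤_R τ` iff `τ = σ s_{i_1} ⋯ s_{i_k}`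
with `ℓ(τ) = ℓ(σ) + k`. -/
def WeakLE {n : ℕ} (σ τ : Equiv.Perm (Fin n)) : Prop :=
  ∃ l : List (Equiv.Perm (Fin n)), (∀ s ∈ l, IsSimpleT s) ∧ τ = σ * l.prod ∧
    permLen τ = permLen σ + l.length

/-- The staircase diagram `λ_n = {(a,b) : a < b}`. -/
def Lam (n : ℕ) := {p : Fin n × Fin n // p.1 < p.2}

/-- Arcs of the staircase valued digraph `𝒜`: from `(a,b)` to the boxes
`(a,k)` and `(k,b)` of the hook based on `(a,b)`, for `a < k < b`. -/
def lamE {n : ℕ} (p q : Lam n) : Prop :=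
  p ≠ q ∧ ((q.1.1 = p.1.1 ∧ q.1.2 < p.1.2) ∨ (q.1.2 = p.1.2 ∧ p.1.1 < q.1.1))

/-- Valuation of the staircase valued digraph: `θ(a,b) = b - a - 1`. -/
def lamTheta {n : ℕ} (p : Lam n) : ℕ := (p.1.2 : ℕ) - (p.1.1 : ℕ) - 1

instance {n : ℕ} : Fintype (Lam n) := Subtype.fintype _

/-- The inversion set of `σ ∈ S_n`, as a set of boxes of the staircase diagram. -/
def invLam {n : ℕ} (σ : Equiv.Perm (Fin n)) : Finset (Lam n) :=
  Finset.univ.filter fun p => σ⁻¹ p.1.2 < σ⁻¹ p.1.1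

section AuxProof

open Finset

variable {n : ℕ}



theorem Equiv.Perm.inv_apply_self {α : Type*} (f : Equiv.Perm α) (x : α) : f⁻¹ (f x) = x :=
  Equiv.symm_apply_apply f x

theorem Equiv.Perm.apply_inv_self {α : Type*} (f : Equiv.Perm α) (x : α) : f (f⁻¹ x) = x :=
  Equiv.apply_symm_apply f x

theorem mem_invLam {σ : Equiv.Perm (Fin n)} {p : Lam n} :
    p ∈ invLam σ ↔ σ⁻¹ p.1.2 < σ⁻¹ p.1.1 := by
  simp [invLam]

theorem perm_eq_one {σ : Equiv.Perm (Fin n)}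
    (h : ∀ i j : Fin n, (j : ℕ) = (i : ℕ) + 1 → σ i < σ j) : σ = 1 := by
  have aux : ∀ d (a b : Fin n), (b : ℕ) = (a : ℕ) + d + 1 → σ a < σ b := by
    intro d
    induction d with
    | zero => intro a b hb; exact h a b (by omega)
    | succ d ih =>
      intro a b hb
      have hc : (a : ℕ) + d + 1 < n := by have := b.isLt; omega
      exact (ih a ⟨_, hc⟩ rfl).trans (h ⟨_, hc⟩ b (by simp; omega))
  have hm : StrictMono σ := by
    intro a b hab
    have hab' := (Fin.lt_def).1 hab
    exact aux ((b : ℕ) - (a : ℕ) - 1) a b (by omega)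
  have he : StrictMono.orderIsoOfSurjective σ hm σ.surjective = OrderIso.refl (Fin n) :=
    Subsingleton.elim _ _
  ext x
  have h1 : StrictMono.orderIsoOfSurjective σ hm σ.surjective x = σ x := rfl
  simp only [he, OrderIso.refl_apply] at h1
  simp [← h1]

theorem permLen_eq_card {σ : Equiv.Perm (Fin n)} : permLen σ = (invLam σ).card := by
  unfold permLen InvSet invLam
  apply Finset.card_bij (fun p hp => (⟨p, (Finset.mem_filter.1 hp).2.1⟩ : Lam n))
  · intro p hp
    simp only [Finset.mem_filter, Finset.mem_univ, true_and] at hp ⊢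
    exact Finset.mem_filter.2 ⟨Finset.mem_univ _, hp.2⟩
  · intro p hp q hq hpq
    exact congrArg Subtype.val hpq
  · intro q hq
    replace hq := (Finset.mem_filter.1 hq).2
    exact ⟨q.1, by simp only [Finset.mem_filter, Finset.mem_univ, true_and]; exact ⟨q.2, hq⟩, rfl⟩

theorem swap_lt_iff {i j U V : Fin n} (hj : (j : ℕ) = (i : ℕ) + 1) (hUV : U ≠ V)
    (hno : ¬(U = j ∧ V = i)) :
    Equiv.swap i j V < Equiv.swap i j U ↔ ((U = i ∧ V = j) ∨ V < U) := by
  rw [Equiv.swap_apply_def, Equiv.swap_apply_def]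
  split_ifs <;> (simp only [Fin.lt_def, Fin.ext_iff, not_and] at *) <;> omega

theorem p_not_mem {τ : Equiv.Perm (Fin n)} {i j : Fin n} (hj : (j : ℕ) = (i : ℕ) + 1)
    (hab : τ i < τ j) : (⟨(τ i, τ j), hab⟩ : Lam n) ∉ invLam τ := by
  erw [mem_invLam]
  simp only [Equiv.Perm.inv_apply_self]
  rw [Fin.lt_def]
  omega

theorem invLam_mul_swap {τ : Equiv.Perm (Fin n)} {i j : Fin n} (hj : (j : ℕ) = (i : ℕ) + 1)
    (hab : τ i < τ j) :
    invLam (τ * Equiv.swap i j) = insert ⟨(τ i, τ j), hab⟩ (invLam τ) := by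
  ext q
  obtain ⟨⟨u, v⟩, huv⟩ := q
  have hmem : ∀ w : Fin n, (τ * Equiv.swap i j)⁻¹ w = Equiv.swap i j (τ⁻¹ w) := by
    intro w
    simp [mul_inv_rev, Equiv.Perm.mul_apply]
  have hq : (⟨(u, v), huv⟩ : Lam n) = ⟨(τ i, τ j), hab⟩ ↔ τ⁻¹ u = i ∧ τ⁻¹ v = j := by
    constructor
    · intro h
      have h1 : u = τ i := congrArg (fun w : Lam n => w.1.1) h
      have h2 : v = τ j := congrArg (fun w : Lam n => w.1.2) h
      exact ⟨by rw [h1]; simp, by rw [h2]; simp⟩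
    · rintro ⟨h1, h2⟩
      refine Subtype.ext (Prod.ext_iff.2 ⟨?_, ?_⟩)
      · show u = τ i
        rw [← h1]; simp
      · show v = τ j
        rw [← h2]; simp
  erw [Finset.mem_insert, mem_invLam, mem_invLam, hq]
  simp only [hmem]
  apply swap_lt_iff hj
  · intro hc
    exact (ne_of_lt huv) (by simpa using congrArg τ hc)
  · rintro ⟨h1, h2⟩
    have hu : u = τ j := by rw [← h1]; simp
    have hv : v = τ i := by rw [← h2]; simp
    rw [hu, hv] at huv
    exact absurd hab (not_lt.2 huv.le)

theorem permLen_mul_swap {τ : Equiv.Perm (Fin n)} {i j : Fin n} (hj : (j : ℕ) = (i : ℕ) + 1)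
    (hab : τ i < τ j) : permLen (τ * Equiv.swap i j) = permLen τ + 1 := by
  rw [permLen_eq_card, permLen_eq_card, invLam_mul_swap hj hab]
  exact Finset.card_insert_of_notMem (p_not_mem hj hab)




theorem not_mem_invLam_lt {σ : Equiv.Perm (Fin n)} {z : Lam n} (hz : z ∉ invLam σ) :
    σ⁻¹ z.1.1 < σ⁻¹ z.1.2 := by
  rw [mem_invLam, not_lt] at hz
  rcases lt_or_eq_of_le hz with h | h
  · exact h
  · exfalso
    have := congrArg σ h
    simp only [Equiv.Perm.apply_inv_self] at this
    exact absurd (this ▸ z.2) (lt_irrefl _)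

theorem curVal_eq_card {σ : Equiv.Perm (Fin n)} {z : Lam n} (hz : z ∉ invLam σ) :
    curVal lamE lamTheta (invLam σ) z =
      ((Finset.Ioo z.1.1 z.1.2).filter
        (fun k => σ⁻¹ z.1.1 < σ⁻¹ k ∧ σ⁻¹ k < σ⁻¹ z.1.2)).card := by
  have hAB : σ⁻¹ z.1.1 < σ⁻¹ z.1.2 := not_mem_invLam_lt hz
  have key : ((invLam σ).filter (fun y => lamE z y)).card
      = ((Finset.Ioo z.1.1 z.1.2).filter
          (fun k => ¬(σ⁻¹ z.1.1 < σ⁻¹ k ∧ σ⁻¹ k < σ⁻¹ z.1.2))).card := by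
    apply Finset.card_bij (fun y _ => if y.1.1 = z.1.1 then y.1.2 else y.1.1)
    · intro y hy
      rw [Finset.mem_filter] at hy
      obtain ⟨hyR, _, hcase⟩ := hy
      rw [mem_invLam] at hyR
      rw [Finset.mem_filter, Finset.mem_Ioo]
      rcases hcase with ⟨h1, h2⟩ | ⟨h1, h2⟩
      · rw [if_pos h1]
        rw [h1] at hyR
        refine ⟨⟨by rw [← h1]; exact y.2, h2⟩, ?_⟩
        rintro ⟨w1, _⟩
        exact absurd hyR (not_lt.2 w1.le)
      · rw [if_neg (ne_of_gt h2)]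
        rw [h1] at hyR
        refine ⟨⟨h2, by rw [← h1]; exact y.2⟩, ?_⟩
        rintro ⟨_, w2⟩
        exact absurd hyR (not_lt.2 w2.le)
    · intro y₁ hy₁ y₂ hy₂ him
      rw [Finset.mem_filter] at hy₁ hy₂
      obtain ⟨hR₁, _, hc₁⟩ := hy₁
      obtain ⟨hR₂, _, hc₂⟩ := hy₂
      rw [mem_invLam] at hR₁ hR₂
      rcases hc₁ with ⟨h11, h12⟩ | ⟨h11, h12⟩ <;> rcases hc₂ with ⟨h21, h22⟩ | ⟨h21, h22⟩
      · rw [if_pos h11, if_pos h21] at him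
        exact Subtype.ext (Prod.ext_iff.2 ⟨h11.trans h21.symm, him⟩)
      · rw [if_pos h11, if_neg (ne_of_gt h22)] at him
        exfalso
        rw [h11] at hR₁
        rw [h21] at hR₂
        rw [← him] at hR₂
        exact absurd (hR₂.trans hR₁) (not_lt.2 hAB.le)
      · rw [if_neg (ne_of_gt h12), if_pos h21] at him
        exfalso
        rw [h11] at hR₁
        rw [h21] at hR₂
        rw [him] at hR₁
        exact absurd (hR₁.trans hR₂) (not_lt.2 hAB.le)
      · rw [if_neg (ne_of_gt h12), if_neg (ne_of_gt h22)] at him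
        exact Subtype.ext (Prod.ext_iff.2 ⟨him, h11.trans h21.symm⟩)
    · intro k hk
      rw [Finset.mem_filter, Finset.mem_Ioo] at hk
      obtain ⟨⟨hk1, hk2⟩, hnw⟩ := hk
      have hka : σ⁻¹ k ≠ σ⁻¹ z.1.1 := fun h => absurd (σ⁻¹.injective h) (ne_of_gt hk1)
      have hkb : σ⁻¹ k ≠ σ⁻¹ z.1.2 := fun h => absurd (σ⁻¹.injective h) (ne_of_lt hk2)
      rcases lt_or_gt_of_ne hka with h | h
      · refine ⟨⟨(z.1.1, k), hk1⟩, ?_, ?_⟩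
        · erw [Finset.mem_filter, mem_invLam]
          refine ⟨h, ?_, Or.inl ⟨rfl, hk2⟩⟩
          intro hcon
          have : k = z.1.2 := congrArg (fun w : Lam n => w.1.2) hcon.symm
          exact absurd this (ne_of_lt hk2)
        · exact if_pos rfl
      · have h2 : σ⁻¹ z.1.2 < σ⁻¹ k := by
          rcases lt_or_gt_of_ne hkb with h' | h'
          · exact absurd ⟨h, h'⟩ hnw
          · exact h'
        refine ⟨⟨(k, z.1.2), hk2⟩, ?_, ?_⟩
        · erw [Finset.mem_filter, mem_invLam]
          refine ⟨h2, ?_, Or.inr ⟨rfl, hk1⟩⟩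
          intro hcon
          have : k = z.1.1 := congrArg (fun w : Lam n => w.1.1) hcon.symm
          exact absurd this (ne_of_gt hk1)
        · exact if_neg (ne_of_gt hk1)
    
  have hsum := Finset.card_filter_add_card_filter_not
    (s := Finset.Ioo z.1.1 z.1.2)
    (p := fun k => σ⁻¹ z.1.1 < σ⁻¹ k ∧ σ⁻¹ k < σ⁻¹ z.1.2)
  have hIoo : (Finset.Ioo z.1.1 z.1.2).card = lamTheta z := by
    rw [Fin.card_Ioo]; rfl
  unfold curVal
  rw [key]
  omega


theorem erasable_ascent {τ : Equiv.Perm (Fin n)} {i j : Fin n} (hj : (j : ℕ) = (i : ℕ) + 1)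
    (hab : τ i < τ j) : ErasableAt lamE lamTheta (invLam τ) ⟨(τ i, τ j), hab⟩ := by
  have hp := p_not_mem hj hab
  refine ⟨hp, ?_, ?_⟩
  · rw [curVal_eq_card hp, Finset.card_eq_zero, Finset.filter_eq_empty_iff]
    intro k _
    simp only [Equiv.Perm.inv_apply_self]
    rintro ⟨w1, w2⟩
    rw [Fin.lt_def] at w1 w2
    omega
  · intro z hzR hzE
    rw [curVal_eq_card hzR]
    intro hcard
    rw [Finset.card_eq_zero, Finset.filter_eq_empty_iff] at hcard
    have hzlt := not_mem_invLam_lt hzR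
    rcases hzE.2 with ⟨h1, h2⟩ | ⟨h1, h2⟩
    · -- z = (τ i, c) with τ j < c : h1 : τ i = z.1.1, h2 : τ j < z.1.2
      have hC : (j : ℕ) < (τ⁻¹ z.1.2 : ℕ) := by
        have hge : τ⁻¹ z.1.1 < τ⁻¹ z.1.2 := hzlt
        rw [← h1] at hge
        simp only [Equiv.Perm.inv_apply_self] at hge
        have hne : τ⁻¹ z.1.2 ≠ j := by
          intro hcon
          have : z.1.2 = τ j := by rw [← hcon]; simp
          exact absurd h2 (by rw [this]; exact lt_irrefl _)
        rw [Fin.lt_def] at hge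
        have := Fin.val_ne_of_ne hne
        omega
      have hmm : τ j ∈ Finset.Ioo z.1.1 z.1.2 := by
        rw [Finset.mem_Ioo, ← h1]
        exact ⟨hab, h2⟩
      refine hcard hmm ?_
      · simp only [Equiv.Perm.inv_apply_self]
        constructor
        · rw [← h1]; simp only [Equiv.Perm.inv_apply_self]
          rw [Fin.lt_def]; omega
        · rw [Fin.lt_def]; omega
    · -- z = (c, τ j) with c < τ i : h1 : τ j = z.1.2, h2 : z.1.1 < τ i
      have hC : (τ⁻¹ z.1.1 : ℕ) < (i : ℕ) := by
        have hge : τ⁻¹ z.1.1 < τ⁻¹ z.1.2 := hzlt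
        rw [← h1] at hge
        simp only [Equiv.Perm.inv_apply_self] at hge
        have hne : τ⁻¹ z.1.1 ≠ i := by
          intro hcon
          have : z.1.1 = τ i := by rw [← hcon]; simp
          exact absurd h2 (by rw [this]; exact lt_irrefl _)
        rw [Fin.lt_def] at hge
        have := Fin.val_ne_of_ne hne
        omega
      have hmm : τ i ∈ Finset.Ioo z.1.1 z.1.2 := by
        rw [Finset.mem_Ioo, ← h1]
        exact ⟨h2, hab⟩
      refine hcard hmm ?_
      · simp only [Equiv.Perm.inv_apply_self]
        constructor
        · rw [Fin.lt_def]; omega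
        · rw [← h1]; simp only [Equiv.Perm.inv_apply_self]
          rw [Fin.lt_def]; omega

theorem erasable_imp {σ : Equiv.Perm (Fin n)} {x : Lam n}
    (hx : ErasableAt lamE lamTheta (invLam σ) x) :
    ∃ i j : Fin n, (j : ℕ) = (i : ℕ) + 1 ∧ σ i = x.1.1 ∧ σ j = x.1.2 := by
  obtain ⟨hxR, hcv, hmin⟩ := hx
  have hAB : σ⁻¹ x.1.1 < σ⁻¹ x.1.2 := not_mem_invLam_lt hxR
  refine ⟨σ⁻¹ x.1.1, σ⁻¹ x.1.2, ?_, by simp, by simp⟩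
  by_contra hcon
  have hcon' : (σ⁻¹ x.1.1 : ℕ) + 1 < (σ⁻¹ x.1.2 : ℕ) := by
    rw [Fin.lt_def] at hAB; omega
  rw [curVal_eq_card hxR, Finset.card_eq_zero, Finset.filter_eq_empty_iff] at hcv
  -- W x is empty
  set A := σ⁻¹ x.1.1 with hA
  set B := σ⁻¹ x.1.2 with hB
  set S : Finset (Fin n) := Finset.univ.filter (fun k => A < σ⁻¹ k ∧ σ⁻¹ k < B) with hS
  have hSmem : ∀ k, k ∈ S ↔ (A < σ⁻¹ k ∧ σ⁻¹ k < B) := by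
    intro k; simp [hS]
  have hSne : S.Nonempty := by
    have hlt : (A : ℕ) + 1 < n := by have := B.isLt; omega
    refine ⟨σ ⟨(A : ℕ) + 1, hlt⟩, ?_⟩
    rw [hSmem]
    simp only [Equiv.Perm.inv_apply_self]
    constructor
    · rw [Fin.lt_def]; exact Nat.lt_succ_self _
    · rw [Fin.lt_def]; exact hcon'
  have hSab : ∀ k ∈ S, k < x.1.1 ∨ x.1.2 < k := by
    intro k hk
    rw [hSmem] at hk
    have hka : k ≠ x.1.1 := by
      intro h; rw [h] at hk; exact absurd hk.1 (lt_irrefl _)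
    have hkb : k ≠ x.1.2 := by
      intro h; rw [h] at hk; exact absurd hk.2 (lt_irrefl _)
    rcases lt_trichotomy k x.1.1 with h | h | h
    · exact Or.inl h
    · exact absurd h hka
    · rcases lt_trichotomy k x.1.2 with h' | h' | h'
      · exact absurd hk (hcv (Finset.mem_Ioo.2 ⟨h, h'⟩))
      · exact absurd h' hkb
      · exact Or.inr h'
  by_cases hT : (S.filter (fun w => w < x.1.1)).Nonempty
  · set T := S.filter (fun w => w < x.1.1) with hTdef
    set k := T.max' hT with hkdef
    have hkmem : k ∈ T := T.max'_mem hT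
    rw [hTdef, Finset.mem_filter] at hkmem
    obtain ⟨hkS, hka⟩ := hkmem
    rw [hSmem] at hkS
    have hz : (k, x.1.2).1 < (k, x.1.2).2 := lt_trans hka x.2
    have hzR : (⟨(k, x.1.2), hz⟩ : Lam n) ∉ invLam σ := by
      erw [mem_invLam]
      exact not_lt.2 hkS.2.le
    have hzE : lamE (⟨(k, x.1.2), hz⟩ : Lam n) x := by
      refine ⟨?_, Or.inr ⟨rfl, hka⟩⟩
      intro h
      have : k = x.1.1 := congrArg (fun w : Lam n => w.1.1) h
      exact absurd this (ne_of_lt hka)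
    have hne := hmin _ hzR hzE
    rw [curVal_eq_card hzR] at hne
    apply hne
    rw [Finset.card_eq_zero, Finset.filter_eq_empty_iff]
    intro m hm
    rw [Finset.mem_Ioo] at hm
    rintro ⟨w1, w2⟩
    have hmS : m ∈ S := by
      rw [hSmem]
      exact ⟨lt_trans hkS.1 w1, w2⟩
    rcases hSab m hmS with h | h
    · have hle : m ≤ k := Finset.le_max' T m (by rw [hTdef, Finset.mem_filter]; exact ⟨hmS, h⟩)
      exact absurd hm.1 (not_lt.2 hle)
    · exact absurd hm.2 (not_lt.2 h.le)
  · have hSb : ∀ k ∈ S, x.1.2 < k := by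
      intro k hk
      rcases hSab k hk with h | h
      · exact absurd ⟨k, Finset.mem_filter.2 ⟨hk, h⟩⟩ hT
      · exact h
    set k := S.min' hSne with hkdef
    have hkS : k ∈ S := S.min'_mem hSne
    have hbk : x.1.2 < k := hSb k hkS
    rw [hSmem] at hkS
    have hz : (x.1.1, k).1 < (x.1.1, k).2 := lt_trans x.2 hbk
    have hzR : (⟨(x.1.1, k), hz⟩ : Lam n) ∉ invLam σ := by
      erw [mem_invLam]
      exact not_lt.2 hkS.1.le
    have hzE : lamE (⟨(x.1.1, k), hz⟩ : Lam n) x := by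
      refine ⟨?_, Or.inl ⟨rfl, hbk⟩⟩
      intro h
      have : k = x.1.2 := congrArg (fun w : Lam n => w.1.2) h
      exact absurd this (ne_of_gt hbk)
    have hne := hmin _ hzR hzE
    rw [curVal_eq_card hzR] at hne
    apply hne
    rw [Finset.card_eq_zero, Finset.filter_eq_empty_iff]
    intro m hm
    rw [Finset.mem_Ioo] at hm
    rintro ⟨w1, w2⟩
    have hmS : m ∈ S := by
      rw [hSmem]
      exact ⟨w1, lt_trans w2 hkS.2⟩
    have hle : k ≤ m := Finset.min'_le S m hmS
    exact absurd hm.2 (not_lt.2 hle)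





theorem peelFrom_append {V : Type*} {E : V → V → Prop} {θ : V → ℕ} (L : List V) (x : V) :
    ∀ R : Finset V, PeelFrom E θ R (L ++ [x]) ↔
      PeelFrom E θ R L ∧ ErasableAt E θ (R ∪ L.toFinset) x := by
  induction L with
  | nil => intro R; simp [PeelFrom]
  | cons y L ih =>
    intro R
    simp only [List.cons_append, PeelFrom, List.append_eq, ih, List.toFinset_cons,
      Finset.union_insert, Finset.insert_union]
    tauto

theorem invLam_one : invLam (1 : Equiv.Perm (Fin n)) = ∅ := by
  rw [Finset.eq_empty_iff_forall_notMem]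
  intro p hp
  rw [mem_invLam] at hp
  simp only [inv_one, Equiv.Perm.one_apply] at hp
  exact absurd p.2 (not_lt.2 hp.le)

theorem descent_or_one (σ : Equiv.Perm (Fin n)) :
    (∃ i j : Fin n, (j : ℕ) = (i : ℕ) + 1 ∧ σ j < σ i) ∨ σ = 1 := by
  by_cases h : ∃ i j : Fin n, (j : ℕ) = (i : ℕ) + 1 ∧ σ j < σ i
  · exact Or.inl h
  · push_neg at h
    refine Or.inr (perm_eq_one fun i j hj => ?_)
    have hne : σ i ≠ σ j := fun hc => by
      have : i = j := σ.injective hc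
      rw [this] at hj; omega
    rcases lt_or_gt_of_ne hne with h' | h'
    · exact h'
    · exact absurd (h i j hj) (not_le.2 h')

theorem isInitial_invLam (σ : Equiv.Perm (Fin n)) :
    IsInitialSection lamE lamTheta (invLam σ) := by
  suffices H : ∀ c (σ : Equiv.Perm (Fin n)), (invLam σ).card = c →
      IsInitialSection lamE lamTheta (invLam σ) from H _ σ rfl
  intro c
  induction c using Nat.strong_induction_on with
  | _ c ih =>
    intro σ hc
    rcases descent_or_one σ with ⟨i, j, hj, hd⟩ | h1
    · have hti : (σ * Equiv.swap i j) i = σ j := by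
        simp [Equiv.Perm.mul_apply]
      have htj : (σ * Equiv.swap i j) j = σ i := by
        simp [Equiv.Perm.mul_apply]
      set τ := σ * Equiv.swap i j with hτ
      have hab : τ i < τ j := by rw [hti, htj]; exact hd
      have hback : τ * Equiv.swap i j = σ := by
        rw [hτ, mul_assoc, Equiv.swap_mul_self, mul_one]
      have hins : invLam σ = insert ⟨(τ i, τ j), hab⟩ (invLam τ) := by
        rw [← hback]; exact invLam_mul_swap hj hab
      have hcard : (invLam τ).card < c := by
        have hci : (invLam σ).card = (invLam τ).card + 1 := by
          rw [hins]
          exact Finset.card_insert_of_notMem (p_not_mem hj hab)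
        omega
      obtain ⟨L, hL, hLf⟩ := ih _ hcard τ rfl
      refine ⟨L ++ [⟨(τ i, τ j), hab⟩], ?_, ?_⟩
      · erw [peelFrom_append]
        refine ⟨hL, ?_⟩
        rw [Finset.empty_union, hLf]
        exact erasable_ascent hj hab
      · erw [List.toFinset_append, hLf, hins, List.toFinset_cons, List.toFinset_nil]
        ext w
        simp only [Finset.mem_union, Finset.mem_insert, Finset.notMem_empty, or_false,
          insert_empty_eq, Finset.mem_singleton]
        erw [Finset.mem_insert, Finset.mem_insert]
        have := Finset.notMem_empty w
        tauto
    · rw [h1, invLam_one]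
      exact ⟨[], trivial, rfl⟩

theorem peel_invLam : ∀ (L : List (Lam n)) (σ : Equiv.Perm (Fin n)),
    PeelFrom lamE lamTheta (invLam σ) L → ∃ τ, invLam σ ∪ L.toFinset = invLam τ := by
  intro L
  induction L with
  | nil => exact fun σ _ => ⟨σ, by simp⟩
  | cons x L ih =>
    rintro σ ⟨hx, hrest⟩
    obtain ⟨i, j, hj, hi1, hi2⟩ := erasable_imp hx
    have hab : σ i < σ j := by rw [hi1, hi2]; exact x.2
    have hxp : x = (⟨(σ i, σ j), hab⟩ : Lam n) :=
      Subtype.ext (Prod.ext_iff.2 ⟨hi1.symm, hi2.symm⟩)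
    have hins : invLam (σ * Equiv.swap i j) = insert x (invLam σ) := by
      rw [invLam_mul_swap hj hab, ← hxp]
    rw [← hins] at hrest
    obtain ⟨τ, hτ⟩ := ih _ hrest
    refine ⟨τ, ?_⟩
    rw [← hτ, hins, List.toFinset_cons, Finset.union_insert, Finset.insert_union]

theorem simple_step {σ s : Equiv.Perm (Fin n)} (hs : IsSimpleT s) :
    (permLen (σ * s) = permLen σ + 1 ∧ invLam σ ⊆ invLam (σ * s)) ∨
    (permLen σ = permLen (σ * s) + 1 ∧ invLam (σ * s) ⊆ invLam σ) := by
  obtain ⟨i, j, hj, rfl⟩ := hs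
  have hij : σ i ≠ σ j := fun hc => by
    have : i = j := σ.injective hc
    rw [this] at hj; omega
  rcases lt_or_gt_of_ne hij with h | h
  · left
    refine ⟨permLen_mul_swap hj h, ?_⟩
    rw [invLam_mul_swap hj h]
    exact Finset.subset_insert _ _
  · right
    have hti : (σ * Equiv.swap i j) i = σ j := by simp [Equiv.Perm.mul_apply]
    have htj : (σ * Equiv.swap i j) j = σ i := by simp [Equiv.Perm.mul_apply]
    set τ := σ * Equiv.swap i j with hτ
    have hab : τ i < τ j := by rw [hti, htj]; exact h
    have hback : τ * Equiv.swap i j = σ := by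
      rw [hτ, mul_assoc, Equiv.swap_mul_self, mul_one]
    constructor
    · rw [← hback]
      exact permLen_mul_swap hj hab
    · rw [← hback, invLam_mul_swap hj hab]
      exact Finset.subset_insert _ _

theorem permLen_le : ∀ (l : List (Equiv.Perm (Fin n))) (σ : Equiv.Perm (Fin n)),
    (∀ s ∈ l, IsSimpleT s) → permLen (σ * l.prod) ≤ permLen σ + l.length := by
  intro l
  induction l with
  | nil => intro σ _; simp
  | cons s l ih =>
    intro σ hs
    have hstep : permLen (σ * s) ≤ permLen σ + 1 := by
      rcases simple_step (σ := σ) (hs s (by simp)) with ⟨h1, _⟩ | ⟨h1, _⟩ <;> omega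
    have := ih (σ * s) (fun t ht => hs t (by simp [ht]))
    rw [List.prod_cons, ← mul_assoc]
    simpa using le_trans this (by omega)

theorem weakLE_imp_subset : ∀ (l : List (Equiv.Perm (Fin n))) (σ : Equiv.Perm (Fin n)),
    (∀ s ∈ l, IsSimpleT s) → permLen (σ * l.prod) = permLen σ + l.length →
    invLam σ ⊆ invLam (σ * l.prod) := by
  intro l
  induction l with
  | nil => intro σ _ _; simp
  | cons s l ih =>
    intro σ hs hlen
    have hmul : σ * (s :: l).prod = (σ * s) * l.prod := by
      rw [List.prod_cons, mul_assoc]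
    rw [hmul] at hlen ⊢
    simp only [List.length_cons] at hlen
    rcases simple_step (σ := σ) (hs s (by simp)) with ⟨h1, h2⟩ | ⟨h1, h2⟩
    · refine h2.trans (ih (σ * s) (fun t ht => hs t (by simp [ht])) ?_)
      omega
    · exfalso
      have hb := permLen_le l (σ * s) (fun t ht => hs t (by simp [ht]))
      omega

theorem invLam_mono {σ τ : Equiv.Perm (Fin n)} (h : WeakLE σ τ) : invLam σ ⊆ invLam τ := by
  obtain ⟨l, hl, hprod, hlen⟩ := h
  rw [hprod]
  exact weakLE_imp_subset l σ hl (by rw [← hprod]; omega)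

theorem invLam_injective : Function.Injective (invLam (n := n)) := by
  intro σ τ h
  have key : τ⁻¹ * σ = 1 := by
    apply perm_eq_one
    intro i j hj
    have hij : σ i ≠ σ j := fun hc => by
      have : i = j := σ.injective hc
      rw [this] at hj; omega
    simp only [Equiv.Perm.mul_apply]
    rcases lt_or_gt_of_ne hij with h' | h'
    · have hq : (⟨(σ i, σ j), h'⟩ : Lam n) ∉ invLam σ := by
        erw [mem_invLam]
        simp only [Equiv.Perm.inv_apply_self]
        rw [Fin.lt_def]; omega
      rw [h] at hq
      erw [mem_invLam, not_lt] at hq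
      simp only at hq
      rcases lt_or_eq_of_le hq with h'' | h''
      · exact h''
      · exfalso
        have := τ⁻¹.injective h''
        first
          | exact hij this
          | exact hij this.symm
    · have hq : (⟨(σ j, σ i), h'⟩ : Lam n) ∈ invLam σ := by
        erw [mem_invLam]
        simp only [Equiv.Perm.inv_apply_self]
        rw [Fin.lt_def]; omega
      rw [h] at hq
      erw [mem_invLam] at hq
      exact hq
  have := congrArg (fun w => τ * w) key
  simpa [← mul_assoc] using this

theorem subset_imp_weakLE : ∀ k (σ τ : Equiv.Perm (Fin n)),
    (invLam τ).card - (invLam σ).card = k → invLam σ ⊆ invLam τ → WeakLE σ τ := by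
  intro k
  induction k using Nat.strong_induction_on with
  | _ k ih =>
    intro σ τ hk hsub
    by_cases heq : σ = τ
    · subst heq
      exact ⟨[], by simp, by simp, by simp⟩
    · have hstep : ∃ i j : Fin n, (j : ℕ) = (i : ℕ) + 1 ∧ ∃ hlt : σ i < σ j,
          (⟨(σ i, σ j), hlt⟩ : Lam n) ∈ invLam τ := by
        by_contra hcon
        push_neg at hcon
        apply heq
        have key : τ⁻¹ * σ = 1 := by
          apply perm_eq_one
          intro i j hj
          have hij : σ i ≠ σ j := fun hc => by
            have : i = j := σ.injective hc
            rw [this] at hj; omega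
          simp only [Equiv.Perm.mul_apply]
          rcases lt_or_gt_of_ne hij with h' | h'
          · have hq := hcon i j hj h'
            erw [mem_invLam, not_lt] at hq
            simp only at hq
            rcases lt_or_eq_of_le hq with h'' | h''
            · exact h''
            · exfalso
              have := τ⁻¹.injective h''
              first
                | exact hij this
                | exact hij this.symm
          · have hq : (⟨(σ j, σ i), h'⟩ : Lam n) ∈ invLam σ := by
              erw [mem_invLam]
              simp only [Equiv.Perm.inv_apply_self]
              rw [Fin.lt_def]; omega
            have hq2 := hsub hq
            erw [mem_invLam] at hq2
            exact hq2
        have := congrArg (fun w => τ * w) key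
        simpa [← mul_assoc] using this
      obtain ⟨i, j, hj, hlt, hmem⟩ := hstep
      have hins := invLam_mul_swap (τ := σ) hj hlt
      have hsub' : invLam (σ * Equiv.swap i j) ⊆ invLam τ := by
        rw [hins]
        exact Finset.insert_subset hmem hsub
      have hpl : permLen (σ * Equiv.swap i j) = permLen σ + 1 := permLen_mul_swap hj hlt
      have hci : (invLam (σ * Equiv.swap i j)).card = (invLam σ).card + 1 := by
        rw [hins]
        exact Finset.card_insert_of_notMem (p_not_mem hj hlt)
      have hle : (invLam (σ * Equiv.swap i j)).card ≤ (invLam τ).card :=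
        Finset.card_le_card hsub'
      have hsle : (invLam σ).card ≤ (invLam τ).card := Finset.card_le_card hsub
      obtain ⟨l, hl, hprod, hlen⟩ :=
        ih (k - 1) (by omega) (σ * Equiv.swap i j) τ (by omega) hsub'
      refine ⟨Equiv.swap i j :: l, ?_, ?_, ?_⟩
      · intro t ht
        rcases List.mem_cons.1 ht with rfl | ht'
        · exact ⟨i, j, hj, rfl⟩
        · exact hl t ht'
      · rw [List.prod_cons, ← mul_assoc]
        exact hprod
      · rw [List.length_cons]
        omega

end AuxProof

/-- the poset of initial sections of the staircase valued digraph
`𝒜`, ordered by inclusion, is isomorphic to the right weak order on `S_n`, via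
the map `σ ↦ Inv(σ)`. -/
theorem staircase_iso_weakOrder (n : ℕ) :
    (∀ σ τ : Equiv.Perm (Fin n), WeakLE σ τ ↔ invLam σ ⊆ invLam τ) ∧
    (∀ A : Finset (Lam n),
        IsInitialSection lamE lamTheta A ↔ ∃ σ : Equiv.Perm (Fin n), A = invLam σ) ∧
    Function.Injective (invLam (n := n)) := by
  refine ⟨fun σ τ => ⟨invLam_mono, fun h => subset_imp_weakLE _ σ τ rfl h⟩,
    fun A => ⟨?_, ?_⟩, invLam_injective⟩
  · rintro ⟨L, hL, hA⟩
    rw [show (∅ : Finset (Lam n)) = invLam (1 : Equiv.Perm (Fin n)) from invLam_one.symm] at hL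
    obtain ⟨τ, hτ⟩ := peel_invLam L 1 hL
    exact ⟨τ, by rw [← hA, ← hτ, invLam_one, Finset.empty_union]⟩
  · rintro ⟨σ, rfl⟩
    exact isInitial_invLam σ
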